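/- arXiv:1405.2765 — 2 statements merged into one kernel-verified Lean document; each statement's English description precedes it below -/
import Mathlib

section
/- There exist universal constants c1,c2∈(0,∞) such that for every finite connected weighted graph G with at least two vertices, every x∈V(G) and every λ≥4, one has μ^G_x·r(G)·P^G_x( τ⁺_x ≥ λ·m(G)·r(G) ) ≤ c1·e^{−c2·λ}, where τ⁺_x=inf{t≥1: X^G_t=x} is the first return time to x. -/
open MeasureTheory Classical

/-- A finite weighted graph: a symmetric nonnegative weight function on pairs of vertices,
positive exactly on edges, with no self-loops, such that the resulting graph is connected. -/
structure FinWeightedGraph (V : Type) [Fintype V] : Type where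
  w : V → V → ℝ
  symm : ∀ x y, w x y = w y x
  nonneg : ∀ x y, 0 ≤ w x y
  loopless : ∀ x, w x x = 0
  connected : ∀ x y : V, Relation.ReflTransGen (fun a b => 0 < w a b) x y

namespace FinWeightedGraph

variable {V : Type} [Fintype V] (G : FinWeightedGraph V)

/-- The weight `μ^G_x` of a vertex. -/
noncomputable def deg (x : V) : ℝ := ∑ y, G.w x y

/-- The total mass `m(G) = μ^G(V(G))`. -/
noncomputable def mass : ℝ := ∑ x, G.deg x

/-- The measure `μ^G(A)` of a set of vertices. -/
noncomputable def vol (A : Set V) : ℝ := ∑ x, A.indicator G.deg x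

/-- The Dirichlet form `E_G(f,f)`. -/
noncomputable def dirichlet (f : V → ℝ) : ℝ :=
  (1 / 2) * ∑ x, ∑ y, G.w x y * (f x - f y) ^ 2

/-- The effective resistance `R_G(x,y)`. -/
noncomputable def res (x y : V) : ℝ :=
  if x = y then 0
  else (sInf {e : ℝ | ∃ f : V → ℝ, f x = 0 ∧ f y = 1 ∧ G.dirichlet f = e})⁻¹

/-- The resistance diameter `r(G)`. -/
noncomputable def resDiam : ℝ := ⨆ x : V, ⨆ y : V, G.res x y

/-- `r₀(G)`, the minimal resistance between distinct vertices. -/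
noncomputable def minRes : ℝ := sInf {e : ℝ | ∃ x y : V, x ≠ y ∧ G.res x y = e}

/-- The open ball in the resistance metric. -/
def resBall (x : V) (r : ℝ) : Set V := {y | G.res x y < r}

/-- The local time `L^G_t(x)` of a trajectory `ω` at vertex `x` and integer time `t`. -/
noncomputable def localTime [DecidableEq V] (ω : ℕ → V) (t : ℕ) (x : V) : ℝ :=
  (G.deg x)⁻¹ * ∑ i ∈ Finset.range t, (if ω i = x then (1 : ℝ) else 0)

/-- `P` is the law of the discrete-time random walk on `G` started from `z`:
a probability measure on trajectories whose cylinder probabilities are given by the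
products of the transition probabilities `μ^G_{xy}/μ^G_x`. -/
def IsWalkLaw [MeasurableSpace V] (z : V) (P : Measure (ℕ → V)) : Prop :=
  IsProbabilityMeasure P ∧
  ∀ (n : ℕ) (path : ℕ → V),
    P {ω | ∀ k ≤ n, ω k = path k} =
      (if path 0 = z then 1 else 0) *
        ∏ k ∈ Finset.range n, ENNReal.ofReal (G.w (path k) (path (k + 1)) / G.deg (path k))


lemma deg_nonneg (z : V) : 0 ≤ G.deg z :=
  Finset.sum_nonneg fun y _ => G.nonneg z y

lemma deg_pos [Nontrivial V] (z : V) : 0 < G.deg z := by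
  obtain ⟨y, hy⟩ := exists_ne z
  have h := G.connected z y
  rcases h.cases_head with h | ⟨a, ha, _⟩
  · exact absurd h.symm hy
  · calc (0:ℝ) < G.w z a := ha
    _ ≤ G.deg z := Finset.single_le_sum (f := fun w => G.w z w)
        (fun i _ => G.nonneg z i) (Finset.mem_univ a)

lemma deg_le_mass (z : V) : G.deg z ≤ G.mass :=
  Finset.single_le_sum (fun i _ => G.deg_nonneg i) (Finset.mem_univ z)

lemma mass_pos [Nontrivial V] : 0 < G.mass := by
  obtain ⟨z, _, _⟩ := ‹Nontrivial V›.exists_pair_ne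
  exact lt_of_lt_of_le (G.deg_pos z) (G.deg_le_mass z)

lemma dirichlet_nonneg (f : V → ℝ) : 0 ≤ G.dirichlet f := by
  unfold dirichlet
  have : (0:ℝ) ≤ ∑ x, ∑ y, G.w x y * (f x - f y) ^ 2 :=
    Finset.sum_nonneg fun x _ => Finset.sum_nonneg fun y _ =>
      mul_nonneg (G.nonneg x y) (sq_nonneg _)
  linarith

lemma single_edge_le_dirichlet (a b : V) (hab : a ≠ b) (f : V → ℝ) :
    G.w a b * (f a - f b) ^ 2 ≤ G.dirichlet f := by
  unfold dirichlet
  set g : V → ℝ := fun x => ∑ y, G.w x y * (f x - f y) ^ 2 with hg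
  have hgnn : ∀ x : V, 0 ≤ g x :=
    fun x => Finset.sum_nonneg fun y _ => mul_nonneg (G.nonneg x y) (sq_nonneg _)
  have hga : G.w a b * (f a - f b)^2 ≤ g a :=
    Finset.single_le_sum (f := fun y => G.w a y * (f a - f y)^2)
      (fun i _ => mul_nonneg (G.nonneg a i) (sq_nonneg _)) (Finset.mem_univ b)
  have hgb : G.w b a * (f b - f a)^2 ≤ g b :=
    Finset.single_le_sum (f := fun y => G.w b y * (f b - f y)^2)
      (fun i _ => mul_nonneg (G.nonneg b i) (sq_nonneg _)) (Finset.mem_univ a)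
  have hpair : g a + g b ≤ ∑ x, g x := by
    have := Finset.sum_le_sum_of_subset_of_nonneg
      (s := ({a, b} : Finset V)) (t := Finset.univ)
      (f := g) (Finset.subset_univ _) (fun i _ _ => hgnn i)
    rwa [Finset.sum_pair hab] at this
  have hsym : G.w b a * (f b - f a)^2 = G.w a b * (f a - f b)^2 := by
    rw [G.symm b a]; ring
  nlinarith [hga, hgb, hpair]

/-- the set of achievable energies -/
def ES (x y : V) : Set ℝ := {e : ℝ | ∃ f : V → ℝ, f x = 0 ∧ f y = 1 ∧ G.dirichlet f = e}

lemma res_eq (x y : V) (h : x ≠ y) : G.res x y = (sInf (G.ES x y))⁻¹ := by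
  unfold res ES; rw [if_neg h]

lemma ES_nonempty (x y : V) (h : x ≠ y) : (G.ES x y).Nonempty := by
  refine ⟨G.dirichlet (fun z => if z = x then 0 else 1), fun z => if z = x then 0 else 1, ?_, ?_, rfl⟩
  · simp
  · simp [h.symm]

lemma ES_bddBelow (x y : V) : BddBelow (G.ES x y) := by
  refine ⟨0, fun e he => ?_⟩
  obtain ⟨f, _, _, hf⟩ := he
  exact hf ▸ G.dirichlet_nonneg f

lemma sInf_ES_nonneg (x y : V) (h : x ≠ y) : 0 ≤ sInf (G.ES x y) :=
  le_csInf (G.ES_nonempty x y h) (fun e he => by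
    obtain ⟨f, _, _, hf⟩ := he; exact hf ▸ G.dirichlet_nonneg f)

/-- increments are controlled by energy along connectivity -/
lemma exists_path_const (x y : V) : ∃ C : ℝ, 0 ≤ C ∧
    ∀ f : V → ℝ, (f y - f x)^2 ≤ C * G.dirichlet f := by
  have h := G.connected x y
  induction h with
  | refl => exact ⟨0, le_refl _, fun f => by simp⟩
  | @tail b c hab hbc ih =>
      obtain ⟨C, hC0, hC⟩ := ih
      refine ⟨2*C + 2*(G.w b c)⁻¹, by positivity, fun f => ?_⟩
      have hbc' : b ≠ c := by
        intro h; rw [h] at hbc; simp [G.loopless] at hbc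
      have h1 : (f c - f b)^2 ≤ (G.w b c)⁻¹ * G.dirichlet f := by
        have := G.single_edge_le_dirichlet b c hbc' f
        rw [le_inv_mul_iff₀ hbc]
        nlinarith [this]
      have h2 := hC f
      have hE := G.dirichlet_nonneg f
      nlinarith [sq_nonneg ((f c - f b) - (f b - f x)), sq_nonneg ((f c - f b) + (f b - f x))]

lemma sInf_ES_pos (x y : V) (h : x ≠ y) : 0 < sInf (G.ES x y) := by
  obtain ⟨C, hC0, hC⟩ := G.exists_path_const x y
  have hCpos : 0 < C := by
    obtain ⟨e, f, hfx, hfy, hfe⟩ := G.ES_nonempty x y h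
    have := hC f
    rw [hfx, hfy] at this
    by_contra hc
    push_neg at hc
    have : C = 0 := le_antisymm hc hC0
    rw [this] at *
    nlinarith [hC f, G.dirichlet_nonneg f]
  have : ∀ e ∈ G.ES x y, C⁻¹ ≤ e := by
    intro e he
    obtain ⟨f, hfx, hfy, hfe⟩ := he
    have := hC f
    rw [hfx, hfy, hfe] at this
    rw [inv_le_iff_one_le_mul₀ hCpos]
    nlinarith
  exact lt_of_lt_of_le (by positivity) (le_csInf (G.ES_nonempty x y h) this)

lemma res_nonneg (x y : V) : 0 ≤ G.res x y := by
  unfold res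
  split
  · exact le_refl _
  · rename_i h
    exact inv_nonneg.mpr (G.sInf_ES_nonneg x y h)

lemma res_le_resDiam (x y : V) : G.res x y ≤ G.resDiam := by
  unfold resDiam
  calc G.res x y ≤ ⨆ y' : V, G.res x y' :=
        le_ciSup (Set.Finite.bddAbove (Set.finite_range _)) y
    _ ≤ ⨆ x' : V, ⨆ y' : V, G.res x' y' :=
        le_ciSup (f := fun x' : V => ⨆ y' : V, G.res x' y')
          (Set.Finite.bddAbove (Set.finite_range _)) x

lemma energy_identity (f : V → ℝ) :
    G.dirichlet f = ∑ z, f z * (G.deg z * f z - ∑ w, G.w z w * f w) := by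
  unfold dirichlet
  have hS1 : ∀ z : V, ∑ w, G.w z w * f z ^ 2 = G.deg z * f z ^ 2 := by
    intro z; rw [← Finset.sum_mul]; rfl
  have expand : ∀ z : V, ∑ w, G.w z w * (f z - f w)^2
      = G.deg z * f z^2 + (∑ w, G.w z w * f w^2) - 2 * (∑ w, G.w z w * (f z * f w)) := by
    intro z
    have h : ∀ w : V, G.w z w * (f z - f w)^2
        = G.w z w * f z^2 + G.w z w * f w^2 - 2 * (G.w z w * (f z * f w)) := by
      intro w; ring
    rw [Finset.sum_congr rfl fun w _ => h w, Finset.sum_sub_distrib, Finset.sum_add_distrib,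
      hS1, ← Finset.mul_sum]
  rw [Finset.sum_congr rfl fun z _ => expand z]
  have hswap : ∑ z : V, ∑ w : V, G.w z w * f w ^ 2 = ∑ z : V, G.deg z * f z ^ 2 := by
    rw [Finset.sum_comm]
    refine Finset.sum_congr rfl fun w _ => ?_
    have : ∀ z : V, G.w z w * f w ^ 2 = G.w w z * f w ^2 := fun z => by rw [G.symm z w]
    rw [Finset.sum_congr rfl fun z _ => this z, ← Finset.sum_mul]
    rfl
  have hRHS : ∀ z : V, f z * (G.deg z * f z - ∑ w, G.w z w * f w)
      = G.deg z * f z ^ 2 - ∑ w, G.w z w * (f z * f w) := by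
    intro z
    have h0 : f z * (G.deg z * f z - ∑ w, G.w z w * f w)
        = G.deg z * f z ^ 2 - f z * ∑ w, G.w z w * f w := by ring
    rw [h0]
    congr 1
    rw [Finset.mul_sum]
    refine Finset.sum_congr rfl fun w _ => ?_
    ring
  rw [Finset.sum_congr rfl fun z _ => hRHS z]
  simp only [Finset.sum_sub_distrib, Finset.sum_add_distrib, hswap]
  rw [← Finset.mul_sum]
  ring
lemma dirichlet_smul (f : V → ℝ) (c : ℝ) :
    G.dirichlet (fun w => c * f w) = c^2 * G.dirichlet f := by
  unfold dirichlet
  have h : ∑ x, ∑ y, G.w x y * (c * f x - c * f y)^2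
      = c^2 * ∑ x, ∑ y, G.w x y * (f x - f y)^2 := by
    rw [Finset.mul_sum]
    refine Finset.sum_congr rfl fun a _ => ?_
    rw [Finset.mul_sum]
    refine Finset.sum_congr rfl fun b _ => ?_
    ring
  rw [h]; ring

/-- fundamental resistance inequality -/
lemma sq_le_res_mul_dirichlet (x z : V) (f : V → ℝ) (hfx : f x = 0) :
    (f z)^2 ≤ G.res x z * G.dirichlet f := by
  rcases eq_or_ne x z with h | h
  · rw [← h, hfx]; simp [res]
  rcases eq_or_ne (f z) 0 with hz | hz
  · rw [hz]
    simpa using mul_nonneg (G.res_nonneg x z) (G.dirichlet_nonneg f)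
  · set g : V → ℝ := fun w => (f z)⁻¹ * f w with hg
    have hmem : G.dirichlet g ∈ G.ES x z :=
      ⟨g, by simp [hg, hfx], by simp [hg, inv_mul_cancel₀ hz], rfl⟩
    have h1 : sInf (G.ES x z) ≤ G.dirichlet g := csInf_le (G.ES_bddBelow x z) hmem
    have h2 : G.dirichlet g = ((f z)^2)⁻¹ * G.dirichlet f := by
      rw [hg, G.dirichlet_smul f ((f z)⁻¹)]
      congr 1
      rw [← inv_pow]
    have hpos := G.sInf_ES_pos x z h
    have h3 : (f z)^2 ≤ (sInf (G.ES x z))⁻¹ * G.dirichlet f := by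
      rw [h2] at h1
      have hz2 : (0:ℝ) < (f z)^2 := by positivity
      rw [le_inv_mul_iff₀ hpos]
      calc sInf (G.ES x z) * (f z)^2 ≤ ((f z)^2)⁻¹ * G.dirichlet f * (f z)^2 := by
            nlinarith
        _ = G.dirichlet f := by field_simp
    rwa [G.res_eq x z h]

lemma sq_le_resDiam_mul_dirichlet (x z : V) (f : V → ℝ) (hfx : f x = 0) :
    (f z)^2 ≤ G.resDiam * G.dirichlet f :=
  le_trans (G.sq_le_res_mul_dirichlet x z f hfx)
    (mul_le_mul_of_nonneg_right (G.res_le_resDiam x z) (G.dirichlet_nonneg f))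

lemma dirichlet_indicator (y : V) :
    G.dirichlet (fun w => if w = y then 1 else 0) = G.deg y := by
  unfold dirichlet
  have h : ∀ a b : V, G.w a b * ((if a = y then (1:ℝ) else 0) - if b = y then 1 else 0) ^ 2
      = (if a = y then G.w a b else 0) + (if b = y then G.w a b else 0)
        - (if a = y then (if b = y then 2 * G.w a b else 0) else 0) := by
    intro a b
    by_cases ha : a = y <;> by_cases hb : b = y <;> simp [ha, hb] <;> ring
  simp only [h]
  simp only [Finset.sum_sub_distrib, Finset.sum_add_distrib]
  have h1 : ∑ a : V, ∑ b : V, (if a = y then G.w a b else 0) = G.deg y := by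
    have : ∀ a : V, ∑ b : V, (if a = y then G.w a b else 0)
        = if a = y then G.deg a else 0 := by
      intro a; by_cases ha : a = y <;> simp [ha, deg]
    simp only [this, Finset.sum_ite_eq', Finset.mem_univ, if_true]
  have h2 : ∑ a : V, ∑ b : V, (if b = y then G.w a b else 0) = G.deg y := by
    have : ∀ a : V, ∑ b : V, (if b = y then G.w a b else 0) = G.w a y := by
      intro a; simp
    simp only [this]
    have : ∀ a : V, G.w a y = G.w y a := fun a => G.symm a y
    simp only [this]; rfl
  have h3 : ∑ a : V, ∑ b : V,
      (if a = y then (if b = y then 2 * G.w a b else 0) else 0) = 0 := by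
    have : ∀ a : V, ∑ b : V, (if a = y then (if b = y then 2 * G.w a b else 0) else 0)
        = if a = y then 2 * G.w a y else 0 := by
      intro a; by_cases ha : a = y <;> simp [ha]
    simp only [this, Finset.sum_ite_eq', Finset.mem_univ, if_true, G.loopless, mul_zero]
  rw [h1, h2, h3]; ring

lemma inv_deg_le_resDiam [Nontrivial V] (y : V) : (G.deg y)⁻¹ ≤ G.resDiam := by
  obtain ⟨x, hxy⟩ := exists_ne y
  have h1 : sInf (G.ES x y) ≤ G.deg y := by
    refine csInf_le (G.ES_bddBelow x y) ?_
    exact ⟨fun w => if w = y then 1 else 0, by simp [hxy], by simp, G.dirichlet_indicator y⟩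
  have hpos := G.sInf_ES_pos x y hxy
  have h2 : (G.deg y)⁻¹ ≤ G.res x y := by
    rw [G.res_eq x y hxy]
    exact inv_anti₀ hpos h1
  exact le_trans h2 (G.res_le_resDiam x y)

lemma one_le_mass_mul_resDiam [Nontrivial V] : 1 ≤ G.mass * G.resDiam := by
  obtain ⟨y, -⟩ := ‹Nontrivial V›.exists_pair_ne
  have hdy := G.deg_pos y
  have h3 : (G.deg y)⁻¹ ≤ G.resDiam := G.inv_deg_le_resDiam y
  calc (1:ℝ) = G.deg y * (G.deg y)⁻¹ := by field_simp
    _ ≤ G.mass * G.resDiam := by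
        apply mul_le_mul (G.deg_le_mass y) h3 (by positivity)
          (le_trans (G.deg_nonneg y) (G.deg_le_mass y))

lemma resDiam_pos [Nontrivial V] : 0 < G.resDiam := by
  obtain ⟨y, -⟩ := ‹Nontrivial V›.exists_pair_ne
  exact lt_of_lt_of_le (inv_pos.mpr (G.deg_pos y)) (G.inv_deg_le_resDiam y)


/-- transition probability `P(z,w) = w(z,w)/deg z`. -/
noncomputable def p (z w : V) : ℝ := G.w z w / G.deg z

/-- survival function: `u x n z = P_z(X_1 ≠ x, ..., X_n ≠ x)`. -/
noncomputable def u (x : V) : ℕ → V → ℝ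
  | 0, _ => 1
  | n+1, z => ∑ w, if w = x then 0 else G.p z w * u x n w

lemma p_nonneg (z w : V) : 0 ≤ G.p z w := div_nonneg (G.nonneg z w) (G.deg_nonneg z)

lemma u_zero (x z : V) : G.u x 0 z = 1 := rfl

lemma u_succ (x : V) (n : ℕ) (z : V) :
    G.u x (n+1) z = ∑ w, if w = x then 0 else G.p z w * G.u x n w := rfl

lemma u_nonneg (x : V) (n : ℕ) (z : V) : 0 ≤ G.u x n z := by
  induction n generalizing z with
  | zero => rw [u_zero]; norm_num
  | succ n ih =>
      rw [u_succ]
      refine Finset.sum_nonneg fun w _ => ?_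
      split
      · exact le_refl _
      · exact mul_nonneg (G.p_nonneg z w) (ih w)

lemma sum_p [Nontrivial V] (z : V) : ∑ w, G.p z w = 1 := by
  unfold p
  rw [← Finset.sum_div]
  exact div_self (ne_of_gt (G.deg_pos z))

/-- sum over paths of transition products equals the survival function -/
lemma path_sum (x : V) : ∀ (n : ℕ) (z : V),
    (∑ q : Fin (n+1) → V,
      if q 0 = z ∧ (∀ i : Fin (n+1), i ≠ 0 → q i ≠ x)
        then ∏ i : Fin n, G.p (q i.castSucc) (q i.succ) else 0) = G.u x n z := by
  intro n
  induction n with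
  | zero =>
      intro z
      rw [u_zero]
      rw [Fintype.sum_equiv (Equiv.funUnique (Fin 1) V)
        _ (fun v => if v = z then 1 else 0) ?_]
      · simp
      · intro q
        have hc : (q 0 = z ∧ ∀ i : Fin 1, i ≠ 0 → q i ≠ x) ↔ q 0 = z :=
          and_iff_left (fun i hi => absurd (Subsingleton.elim i 0) hi)
        simp only [Finset.univ_eq_empty, Finset.prod_empty, if_congr hc rfl rfl]
        rfl
  | succ n ih =>
      intro z
      rw [u_succ]
      rw [← Equiv.sum_comp (Fin.consEquiv (fun _ : Fin (n+2) => V))]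
      rw [Fintype.sum_prod_type]
      simp only [Fin.consEquiv_apply]
      have key : ∀ a : V,
          (∑ rest : Fin (n+1) → V,
            (if (Fin.cons a rest : Fin (n+2) → V) 0 = z ∧
                (∀ i : Fin (n+2), i ≠ 0 → (Fin.cons a rest : Fin (n+2) → V) i ≠ x)
              then ∏ i : Fin (n+1),
                G.p ((Fin.cons a rest : Fin (n+2) → V) i.castSucc)
                    ((Fin.cons a rest : Fin (n+2) → V) i.succ) else 0))
          = if a = z then (∑ w, if w = x then 0 else G.p a w * G.u x n w) else 0 := by
        intro a
        have hcond : ∀ rest : Fin (n+1) → V,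
            ((Fin.cons a rest : Fin (n+2) → V) 0 = z ∧
              (∀ i : Fin (n+2), i ≠ 0 → (Fin.cons a rest : Fin (n+2) → V) i ≠ x))
            ↔ (a = z ∧ ∀ j : Fin (n+1), rest j ≠ x) := by
          intro rest
          constructor
          · rintro ⟨h1, h2⟩
            refine ⟨by simpa using h1, fun j => ?_⟩
            have := h2 j.succ (Fin.succ_ne_zero j)
            simpa using this
          · rintro ⟨h1, h2⟩
            refine ⟨by simpa using h1, fun i hi => ?_⟩
            induction i using Fin.cases with
            | zero => exact absurd rfl hi
            | succ j => simpa using h2 j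
        have hprod : ∀ rest : Fin (n+1) → V,
            (∏ i : Fin (n+1),
              G.p ((Fin.cons a rest : Fin (n+2) → V) i.castSucc)
                  ((Fin.cons a rest : Fin (n+2) → V) i.succ))
            = G.p a (rest 0) * ∏ i : Fin n, G.p (rest i.castSucc) (rest i.succ) := by
          intro rest
          rw [Fin.prod_univ_succ]
          refine congrArg₂ (· * ·) ?_ ?_
          · simp
          · refine Finset.prod_congr rfl fun i _ => ?_
            rw [← Fin.succ_castSucc, Fin.cons_succ, Fin.cons_succ]
        by_cases ha : a = z
        · rw [if_pos ha]
          have hR : ∀ w : V, (if w = x then (0:ℝ) else G.p a w * G.u x n w)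
              = ∑ rest : Fin (n+1) → V,
                (if w = x then 0 else
                  if rest 0 = w ∧ (∀ j : Fin (n+1), j ≠ 0 → rest j ≠ x)
                    then G.p a w * ∏ i : Fin n, G.p (rest i.castSucc) (rest i.succ) else 0) := by
            intro w
            by_cases hw : w = x
            · simp [hw]
            · simp only [hw, if_false]
              rw [← ih w, Finset.mul_sum]
              refine Finset.sum_congr rfl fun rest _ => ?_
              by_cases hc : rest 0 = w ∧ (∀ j : Fin (n+1), j ≠ 0 → rest j ≠ x)
              · rw [if_pos hc, if_pos hc]
              · rw [if_neg hc, if_neg hc, mul_zero]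
          rw [Finset.sum_congr rfl fun w _ => hR w, Finset.sum_comm]
          refine Finset.sum_congr rfl fun rest _ => ?_
          simp only [if_congr (hcond rest) rfl rfl, hprod rest]
          have hI : ∀ w : V, (if w = x then (0:ℝ) else
              if rest 0 = w ∧ (∀ j : Fin (n+1), j ≠ 0 → rest j ≠ x)
                then G.p a w * ∏ i : Fin n, G.p (rest i.castSucc) (rest i.succ) else 0)
              = if w = rest 0 then
                  (if rest 0 = x then 0 else
                    if (∀ j : Fin (n+1), j ≠ 0 → rest j ≠ x)
                      then G.p a (rest 0) * ∏ i : Fin n, G.p (rest i.castSucc) (rest i.succ)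
                      else 0) else 0 := by
            intro w
            by_cases hw : w = rest 0
            · subst hw
              by_cases hwx : rest 0 = x
              · simp [hwx]
              · simp only [hwx, if_false, if_pos rfl]
                by_cases hc2 : (∀ j : Fin (n+1), j ≠ 0 → rest j ≠ x)
                · simp [hc2]
                · simp [hc2]
            · rw [if_neg hw]
              by_cases hwx : w = x
              · simp [hwx]
              · simp only [hwx, if_false]
                rw [if_neg]
                rintro ⟨h1, -⟩
                exact hw h1.symm
          rw [Finset.sum_congr rfl fun w _ => hI w, Finset.sum_ite_eq' Finset.univ (rest 0)]
          rw [if_pos (Finset.mem_univ _)]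
          by_cases h0 : rest 0 = x
          · rw [if_pos h0, if_neg]
            rintro ⟨-, hall⟩
            exact (hall 0) h0
          · rw [if_neg h0]
            by_cases hrest : ∀ j : Fin (n+1), j ≠ 0 → rest j ≠ x
            · rw [if_pos hrest, if_pos]
              · exact ⟨ha, fun j => by
                  by_cases hj : j = 0
                  · rw [hj]; exact h0
                  · exact hrest j hj⟩
            · rw [if_neg hrest, if_neg]
              rintro ⟨-, hall⟩
              exact hrest (fun j _ => hall j)
        · rw [if_neg ha]
          refine Finset.sum_eq_zero fun rest _ => ?_
          rw [if_neg]
          rw [hcond rest]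
          rintro ⟨h1, -⟩
          exact ha h1

      rw [Finset.sum_congr rfl fun a _ => key a, Finset.sum_ite_eq' Finset.univ z]
      rw [if_pos (Finset.mem_univ _)]

section WalkEstimates
variable [Nontrivial V] (x : V)

lemma u_le_one (n : ℕ) (z : V) : G.u x n z ≤ 1 := by
  induction n generalizing z with
  | zero => rw [u_zero]
  | succ n ih =>
      rw [u_succ]
      calc ∑ w, (if w = x then 0 else G.p z w * G.u x n w)
          ≤ ∑ w, G.p z w := by
            refine Finset.sum_le_sum fun w _ => ?_
            split
            · exact G.p_nonneg z w
            · calc G.p z w * G.u x n w ≤ G.p z w * 1 :=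
                    mul_le_mul_of_nonneg_left (ih w) (G.p_nonneg z w)
                _ = G.p z w := mul_one _
        _ = 1 := G.sum_p z

lemma u_mono (n : ℕ) (z : V) : G.u x (n+1) z ≤ G.u x n z := by
  induction n generalizing z with
  | zero => rw [u_zero]; exact G.u_le_one x 1 z
  | succ n ih =>
      rw [u_succ, u_succ]
      refine Finset.sum_le_sum fun w _ => ?_
      split
      · exact le_refl _
      · exact mul_le_mul_of_nonneg_left (ih w) (G.p_nonneg z w)

lemma u_anti (m n : ℕ) (h : m ≤ n) (z : V) : G.u x n z ≤ G.u x m z := by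
  induction n with
  | zero => rw [Nat.le_zero.mp h]
  | succ n ih =>
      rcases Nat.lt_or_ge m (n+1) with h2 | h2
      · exact le_trans (G.u_mono x n z) (ih (Nat.lt_succ_iff.mp h2))
      · rw [le_antisymm h h2]


lemma sum_ite_ne' (f : V → ℝ) : (∑ w, (if w = x then 0 else f w)) = (∑ w, f w) - f x + 0 * G.mass := by
  have h : ∀ w : V, (if w = x then 0 else f w) = f w - (if w = x then f w else 0) := by
    intro w; by_cases hw : w = x <;> simp [hw]
  simp only [h, Finset.sum_sub_distrib, Finset.sum_ite_eq', Finset.mem_univ, if_true, zero_mul,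
    add_zero]

lemma wsum (n : ℕ) (z : V) :
    G.deg z * G.u x (n+1) z = ∑ w, if w = x then 0 else G.w z w * G.u x n w := by
  rw [u_succ, Finset.mul_sum]
  refine Finset.sum_congr rfl fun w _ => ?_
  by_cases hw : w = x
  · simp [hw]
  · simp only [hw, if_false]
    rw [← mul_assoc]
    congr 1
    unfold p
    rw [mul_div_assoc']
    exact mul_div_cancel_left₀ _ (ne_of_gt (G.deg_pos z))

lemma kac_step (n : ℕ) :
    G.deg x * G.u x (n+1) x
      = (∑ w, if w = x then 0 else G.deg w * G.u x n w)
        - ∑ w, if w = x then 0 else G.deg w * G.u x (n+1) w := by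
  have h2 : ∑ w, (if w = x then 0 else G.deg w * G.u x (n+1) w)
      = (∑ w, (if w = x then 0 else G.deg w * G.u x n w))
        - ∑ w, (if w = x then 0 else G.w x w * G.u x n w) := by
    have e1 : ∀ z : V, (if z = x then (0:ℝ) else G.deg z * G.u x (n+1) z)
        = ∑ w, (if z = x then 0 else if w = x then 0 else G.w z w * G.u x n w) := by
      intro z
      by_cases hz : z = x
      · simp [hz]
      · simp only [hz, if_false]
        rw [G.wsum x n z]
    rw [Finset.sum_congr rfl fun z _ => e1 z, Finset.sum_comm]
    have e2 : ∀ w : V, (∑ z, if z = x then (0:ℝ) else if w = x then 0 else G.w z w * G.u x n w)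
        = (if w = x then 0 else (G.deg w - G.w x w) * G.u x n w) := by
      intro w
      by_cases hw : w = x
      · simp [hw]
      · simp only [hw, if_false]
        rw [G.sum_ite_ne' x (fun z => G.w z w * G.u x n w)]
        rw [zero_mul, add_zero, ← Finset.sum_mul]
        have : ∑ z, G.w z w = G.deg w := by
          unfold deg
          exact Finset.sum_congr rfl fun z _ => G.symm z w
        rw [this]
        ring
    rw [Finset.sum_congr rfl fun w _ => e2 w]
    have e3 : ∀ w : V, (if w = x then (0:ℝ) else (G.deg w - G.w x w) * G.u x n w)
        = (if w = x then 0 else G.deg w * G.u x n w)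
          - (if w = x then 0 else G.w x w * G.u x n w) := by
      intro w; by_cases hw : w = x <;> simp [hw] <;> ring
    rw [Finset.sum_congr rfl fun w _ => e3 w, Finset.sum_sub_distrib]
  rw [h2, G.wsum x n x]
  ring

lemma kac_sum (K : ℕ) :
    G.deg x * ∑ n ∈ Finset.range K, G.u x (n+1) x ≤ G.mass := by
  set g : ℕ → ℝ := fun n => ∑ w, if w = x then 0 else G.deg w * G.u x n w with hg
  have step : ∀ n, G.deg x * G.u x (n+1) x = g n - g (n+1) := fun n => G.kac_step x n
  rw [Finset.mul_sum]
  calc ∑ n ∈ Finset.range K, G.deg x * G.u x (n+1) x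
      = ∑ n ∈ Finset.range K, (g n - g (n+1)) := Finset.sum_congr rfl fun n _ => step n
    _ = g 0 - g K := by rw [← Finset.sum_range_sub' g K]
    _ ≤ g 0 := by
        have : 0 ≤ g K := Finset.sum_nonneg fun w _ => by
          split
          · exact le_refl _
          · exact mul_nonneg (G.deg_nonneg w) (G.u_nonneg x K w)
        linarith
    _ ≤ G.mass := by
        unfold mass
        refine Finset.sum_le_sum fun w _ => ?_
        split
        · exact G.deg_nonneg w
        · calc G.deg w * G.u x _ w ≤ G.deg w * 1 :=
              mul_le_mul_of_nonneg_left (G.u_le_one x _ w) (G.deg_nonneg w)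
          _ = G.deg w := mul_one _

lemma kac_bound (K : ℕ) : G.deg x * ((K:ℝ) * G.u x K x) ≤ G.mass := by
  have h1 : (K:ℝ) * G.u x K x ≤ ∑ n ∈ Finset.range K, G.u x (n+1) x := by
    calc (K:ℝ) * G.u x K x = ∑ _n ∈ Finset.range K, G.u x K x := by
          rw [Finset.sum_const, Finset.card_range, nsmul_eq_mul]
      _ ≤ ∑ n ∈ Finset.range K, G.u x (n+1) x :=
          Finset.sum_le_sum fun n hn => G.u_anti x (n+1) K (Finset.mem_range.mp hn) x
  calc G.deg x * ((K:ℝ) * G.u x K x) ≤ G.deg x * ∑ n ∈ Finset.range K, G.u x (n+1) x :=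
        mul_le_mul_of_nonneg_left h1 (G.deg_nonneg x)
    _ ≤ G.mass := G.kac_sum x K


/-- cumulative survival -/
noncomputable def cum (x : V) (N : ℕ) (z : V) : ℝ := ∑ n ∈ Finset.range N, G.u x n z

lemma cum_nonneg (N : ℕ) (z : V) : 0 ≤ G.cum x N z :=
  Finset.sum_nonneg fun n _ => G.u_nonneg x n z

/-- the function `f_N` : cumulative survival, cut off at `x` -/
noncomputable def fN (x : V) (N : ℕ) (z : V) : ℝ := if z = x then 0 else G.cum x N z

lemma fN_nonneg (N : ℕ) (z : V) : 0 ≤ G.fN x N z := by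
  unfold fN; split
  · exact le_refl _
  · exact G.cum_nonneg x N z

lemma fN_field (N : ℕ) (z : V) (hz : z ≠ x) :
    ∑ w, G.w z w * G.fN x N w = G.deg z * (G.cum x N z - 1 + G.u x N z) := by
  have h1 : ∀ w : V, G.w z w * G.fN x N w
      = ∑ n ∈ Finset.range N, (if w = x then 0 else G.w z w * G.u x n w) := by
    intro w
    unfold fN
    by_cases hw : w = x
    · simp [hw]
    · simp only [hw, if_false]
      unfold cum
      rw [Finset.mul_sum]
  rw [Finset.sum_congr rfl fun w _ => h1 w, Finset.sum_comm]
  have h2 : ∀ n : ℕ, ∑ w, (if w = x then 0 else G.w z w * G.u x n w)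
      = G.deg z * G.u x (n+1) z := fun n => (G.wsum x n z).symm
  rw [Finset.sum_congr rfl fun n _ => h2 n, ← Finset.mul_sum]
  congr 1
  have h3 : ∑ n ∈ Finset.range N, G.u x (n+1) z
      = G.cum x N z - G.u x 0 z + G.u x N z := by
    unfold cum
    have ha := Finset.sum_range_succ' (fun n => G.u x n z) N
    have hb := Finset.sum_range_succ (fun n => G.u x n z) N
    linarith
  rw [h3, u_zero]

lemma dirichlet_fN_le (N : ℕ) :
    G.dirichlet (G.fN x N) ≤ ∑ z, G.deg z * G.fN x N z := by
  rw [G.energy_identity (G.fN x N)]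
  refine Finset.sum_le_sum fun z _ => ?_
  by_cases hz : z = x
  · simp [hz, fN]
  · rw [G.fN_field x N z hz]
    have hfz : G.fN x N z = G.cum x N z := by unfold fN; rw [if_neg hz]
    rw [hfz]
    nlinarith [mul_nonneg (mul_nonneg (G.cum_nonneg x N z) (G.deg_nonneg z)) (G.u_nonneg x N z)]

lemma cum_le (N : ℕ) (z : V) (hz : z ≠ x) :
    G.cum x N z ≤ G.mass * G.resDiam := by
  obtain ⟨z₀, -, hmax⟩ := Finset.exists_max_image Finset.univ (G.fN x N) ⟨z, Finset.mem_univ z⟩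
  set H := G.fN x N z₀ with hH
  have hH0 : 0 ≤ H := G.fN_nonneg x N z₀
  have hcz : G.cum x N z = G.fN x N z := by unfold fN; rw [if_neg hz]
  rcases eq_or_lt_of_le hH0 with h0 | hpos
  · rw [hcz]
    calc G.fN x N z ≤ H := hmax z (Finset.mem_univ z)
      _ = 0 := h0.symm
      _ ≤ G.mass * G.resDiam := le_trans zero_le_one (G.one_le_mass_mul_resDiam)
  · have hsq : H^2 ≤ G.resDiam * G.dirichlet (G.fN x N) :=
      G.sq_le_resDiam_mul_dirichlet x z₀ (G.fN x N) (by unfold fN; rw [if_pos rfl])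
    have hdir : G.dirichlet (G.fN x N) ≤ G.mass * H := by
      calc G.dirichlet (G.fN x N) ≤ ∑ w, G.deg w * G.fN x N w := G.dirichlet_fN_le x N
        _ ≤ ∑ w, G.deg w * H := Finset.sum_le_sum fun w _ =>
            mul_le_mul_of_nonneg_left (hmax w (Finset.mem_univ w)) (G.deg_nonneg w)
        _ = G.mass * H := by rw [← Finset.sum_mul]; rfl
    have hrd := (le_of_lt G.resDiam_pos)
    have hkey : H^2 ≤ G.resDiam * (G.mass * H) :=
      le_trans hsq (mul_le_mul_of_nonneg_left hdir hrd)
    have hHle : H ≤ G.mass * G.resDiam := by nlinarith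
    calc G.cum x N z = G.fN x N z := hcz
      _ ≤ H := hmax z (Finset.mem_univ z)
      _ ≤ G.mass * G.resDiam := hHle

lemma u_tail_le (b : ℕ) (z : V) (hz : z ≠ x) :
    ((b:ℝ)+1) * G.u x b z ≤ G.mass * G.resDiam := by
  have h1 : ((b:ℝ)+1) * G.u x b z ≤ G.cum x (b+1) z := by
    unfold cum
    calc ((b:ℝ)+1) * G.u x b z = ∑ _n ∈ Finset.range (b+1), G.u x b z := by
          rw [Finset.sum_const, Finset.card_range, nsmul_eq_mul]; push_cast; ring
      _ ≤ ∑ n ∈ Finset.range (b+1), G.u x n z :=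
          Finset.sum_le_sum fun n hn =>
            G.u_anti x n b (Nat.lt_succ_iff.mp (Finset.mem_range.mp hn)) z
  exact le_trans h1 (G.cum_le x (b+1) z hz)

lemma chain_one (b : ℕ) (B : ℝ) (hB0 : 0 ≤ B) (hB : ∀ w, w ≠ x → G.u x b w ≤ B) :
    ∀ a z, G.u x (a+1+b) z ≤ B * G.u x (a+1) z := by
  intro a
  induction a with
  | zero =>
      intro z
      have e : (0:ℕ)+1+b = b+1 := by omega
      rw [e, u_succ, u_succ, Finset.mul_sum]
      refine Finset.sum_le_sum fun w _ => ?_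
      by_cases hw : w = x
      · simp [hw]
      · simp only [hw, if_false]
        rw [G.u_zero x w]
        calc G.p z w * G.u x b w ≤ G.p z w * B :=
              mul_le_mul_of_nonneg_left (hB w hw) (G.p_nonneg z w)
          _ = B * (G.p z w * 1) := by ring
  | succ a ih =>
      intro z
      have e : a+1+1+b = (a+1+b)+1 := by omega
      rw [e, u_succ, u_succ, Finset.mul_sum]
      refine Finset.sum_le_sum fun w _ => ?_
      by_cases hw : w = x
      · simp [hw]
      · simp only [hw, if_false]
        calc G.p z w * G.u x (a+1+b) w ≤ G.p z w * (B * G.u x (a+1) w) :=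
              mul_le_mul_of_nonneg_left (ih w) (G.p_nonneg z w)
          _ = B * (G.p z w * G.u x (a+1) w) := by ring

lemma chain_iter (b : ℕ) (B : ℝ) (hB0 : 0 ≤ B) (hB : ∀ w, w ≠ x → G.u x b w ≤ B) :
    ∀ (k n : ℕ) (z : V), 1 ≤ n → G.u x (n + k*b) z ≤ B^k * G.u x n z := by
  intro k
  induction k with
  | zero => intro n z _; simp
  | succ k ih =>
      intro n z hn
      obtain ⟨a, ha⟩ : ∃ a, n + k*b = a + 1 := ⟨n + k*b - 1, by omega⟩
      have e : n + (k+1)*b = (a+1) + b := by rw [← ha]; ring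
      rw [e]
      calc G.u x (a+1+b) z ≤ B * G.u x (a+1) z := G.chain_one x b B hB0 hB a z
        _ = B * G.u x (n + k*b) z := by rw [ha]
        _ ≤ B * (B^k * G.u x n z) :=
            mul_le_mul_of_nonneg_left (ih n z hn) hB0
        _ = B^(k+1) * G.u x n z := by ring

end WalkEstimates

section MeasurePart
variable [MeasurableSpace V]

/-- extension of a finite path to an infinite one -/
def pathExt (N : ℕ) (q : Fin (N+1) → V) (k : ℕ) : V := q ⟨min k N, by omega⟩

theorem walk_event_bound (x : V) (P : Measure (ℕ → V)) (hP : G.IsWalkLaw x P) (T : ℝ) (N : ℕ)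
    (hNT : ∀ k : ℕ, 1 ≤ k → k ≤ N → (k:ℝ) < T) :
    P {ω : ℕ → V | ∀ n : ℕ, 0 < n → (n : ℝ) < T → ω n ≠ x}
      ≤ ENNReal.ofReal (G.u x N x) := by
  classical
  set E := {ω : ℕ → V | ∀ n : ℕ, 0 < n → (n : ℝ) < T → ω n ≠ x} with hE
  set Good : (Fin (N+1) → V) → Prop :=
    fun q => q 0 = x ∧ ∀ i : Fin (N+1), i ≠ 0 → q i ≠ x with hGood
  set Cyl : (Fin (N+1) → V) → Set (ℕ → V) :=
    fun q => {ω | ∀ k ≤ N, ω k = pathExt N q k} with hCyl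
  -- covering
  have hcover : E ⊆ {ω : ℕ → V | ω 0 ≠ x} ∪ ⋃ q : Fin (N+1) → V,
      (if Good q then Cyl q else ∅) := by
    intro ω hω
    by_cases h0 : ω 0 = x
    · right
      refine Set.mem_iUnion.mpr ⟨fun i => ω i, ?_⟩
      have hg : Good (fun i : Fin (N+1) => ω i) := by
        constructor
        · simpa using h0
        · intro i hi
          have hipos : 0 < (i:ℕ) := Nat.pos_of_ne_zero (fun hc => hi (Fin.ext hc))
          have hile : (i:ℕ) ≤ N := Nat.lt_succ_iff.mp i.isLt
          exact hω (i:ℕ) hipos (hNT (i:ℕ) hipos hile)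
      rw [if_pos hg]
      intro k hk
      show ω k = pathExt N (fun i : Fin (N+1) => ω i) k
      unfold pathExt
      simp only
      rw [Nat.min_eq_left hk]
    · left; exact h0
  have hbound : P E ≤ P {ω : ℕ → V | ω 0 ≠ x}
      + P (⋃ q : Fin (N+1) → V, (if Good q then Cyl q else ∅)) :=
    le_trans (measure_mono hcover) (measure_union_le _ _)
  -- first piece is zero
  have hzero : P {ω : ℕ → V | ω 0 ≠ x} = 0 := by
    have hsub : {ω : ℕ → V | ω 0 ≠ x} ⊆ ⋃ y : V,
        (if y = x then ∅ else {ω : ℕ → V | ω 0 = y}) := by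
      intro ω hω
      refine Set.mem_iUnion.mpr ⟨ω 0, ?_⟩
      rw [if_neg hω]
      exact rfl
    refine le_antisymm (le_trans (measure_mono hsub) ?_) (by positivity)
    refine le_trans (measure_iUnion_le _) ?_
    have heach : ∀ y : V, P (if y = x then ∅ else {ω : ℕ → V | ω 0 = y}) = 0 := by
      intro y
      by_cases hy : y = x
      · rw [if_pos hy]; exact measure_empty
      · rw [if_neg hy]
        have hset : {ω : ℕ → V | ω 0 = y} = {ω : ℕ → V | ∀ k ≤ 0, ω k = (fun _ => y) k} := by
          ext ω
          constructor
          · intro h k hk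
            rw [Nat.le_zero.mp hk]; exact h
          · intro h; exact h 0 (le_refl 0)
        rw [hset, hP.2 0 (fun _ => y)]
        simp [hy]
    rw [ENNReal.tsum_eq_zero.mpr heach]  -- maybe wrong name
  -- cylinder values
  have hcylval : ∀ q : Fin (N+1) → V, Good q →
      P (Cyl q) = ENNReal.ofReal (∏ i : Fin N, G.p (q i.castSucc) (q i.succ)) := by
    intro q hq
    have := hP.2 N (pathExt N q)
    have hCylq : Cyl q = {ω | ∀ k ≤ N, ω k = pathExt N q k} := rfl
    rw [hCylq, this]
    have hq0 : pathExt N q 0 = x := by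
      unfold pathExt
      simp only [Nat.min_eq_left (Nat.zero_le N)]
      have : (⟨0, by omega⟩ : Fin (N+1)) = 0 := rfl
      rw [this]; exact hq.1
    rw [if_pos hq0, one_mul]
    have hterm : ∀ k ∈ Finset.range N,
        ENNReal.ofReal (G.w (pathExt N q k) (pathExt N q (k+1)) / G.deg (pathExt N q k))
          = ENNReal.ofReal (G.p (pathExt N q k) (pathExt N q (k+1))) := by
      intro k _; rfl
    rw [Finset.prod_congr rfl hterm]
    rw [← ENNReal.ofReal_prod_of_nonneg (fun k _ => G.p_nonneg _ _)]
    congr 1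
    rw [← Fin.prod_univ_eq_prod_range (fun k => G.p (pathExt N q k) (pathExt N q (k+1))) N]
    refine Finset.prod_congr rfl fun i _ => ?_
    have e1 : pathExt N q i = q i.castSucc := by
      unfold pathExt
      congr 1
      ext
      simp [Nat.min_eq_left (le_of_lt i.isLt)]
    have e2 : pathExt N q ((i:ℕ)+1) = q i.succ := by
      unfold pathExt
      congr 1
      ext
      simp [Nat.min_eq_left (Nat.succ_le_of_lt i.isLt)]
    rw [e1, e2]
  -- sum the cylinder bounds
  have hsum : P (⋃ q : Fin (N+1) → V, (if Good q then Cyl q else ∅))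
      ≤ ENNReal.ofReal (G.u x N x) := by
    refine le_trans (measure_iUnion_le _) ?_
    rw [tsum_fintype]
    have heach : ∀ q : Fin (N+1) → V,
        P (if Good q then Cyl q else ∅)
          = ENNReal.ofReal (if Good q then ∏ i : Fin N, G.p (q i.castSucc) (q i.succ) else 0) := by
      intro q
      by_cases hq : Good q
      · rw [if_pos hq, if_pos hq, hcylval q hq]
      · rw [if_neg hq, if_neg hq, measure_empty, ENNReal.ofReal_zero]
    rw [Finset.sum_congr rfl fun q _ => heach q]
    rw [← ENNReal.ofReal_sum_of_nonneg (fun q _ => by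
      split
      · exact Finset.prod_nonneg fun i _ => G.p_nonneg _ _
      · exact le_refl _)]
    rw [← G.path_sum x N x]
  calc P E ≤ P {ω : ℕ → V | ω 0 ≠ x}
        + P (⋃ q : Fin (N+1) → V, (if Good q then Cyl q else ∅)) := hbound
    _ ≤ 0 + ENNReal.ofReal (G.u x N x) := by
        rw [hzero]; exact add_le_add (le_refl 0) hsum
    _ = ENNReal.ofReal (G.u x N x) := by rw [zero_add]

end MeasurePart

end FinWeightedGraph

/-- Lemma 2.1: universal exponential tail bound for the first return time
`τ⁺_x = inf{t ≥ 1 : X_t = x}`. The event below is `{τ⁺_x ≥ λ·m(G)·r(G)}`. -/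
theorem return_time_tail_bound :
    ∃ c1 c2 : ℝ, 0 < c1 ∧ 0 < c2 ∧
      ∀ (V : Type) [Fintype V] [MeasurableSpace V] [Nontrivial V]
        (G : FinWeightedGraph V) (x : V)
        (P : Measure (ℕ → V)), G.IsWalkLaw x P →
        ∀ lam : ℝ, 4 ≤ lam →
        G.deg x * G.resDiam *
            (P {ω | ∀ n : ℕ, 0 < n → (n : ℝ) < lam * G.mass * G.resDiam → ω n ≠ x}).toReal
          ≤ c1 * Real.exp (-(c2 * lam)) := by
  refine ⟨4, Real.log 2 / 3, by norm_num, by positivity, ?_⟩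
  intro V _ _ _ G x P hP lam hlam
  set m := G.mass with hm'
  set r := G.resDiam with hr'
  set M := m * r with hM'
  have hm : 0 < m := G.mass_pos
  have hr : 0 < r := G.resDiam_pos
  have hM1 : 1 ≤ M := G.one_le_mass_mul_resDiam
  have hM0 : 0 < M := lt_of_lt_of_le zero_lt_one hM1
  have hdx : 0 < G.deg x := G.deg_pos x
  set T : ℝ := lam * m * r with hT'
  have hTM : T = lam * M := by rw [hT', hM']; ring
  have hT4 : 4 ≤ T := by
    rw [hTM]
    calc (4:ℝ) = 4 * 1 := by norm_num
      _ ≤ lam * M := mul_le_mul hlam hM1 zero_le_one (by linarith)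
  have hT0 : 0 < T := by linarith
  set N : ℕ := ⌈T⌉₊ - 1 with hN'
  have hceil1 : 1 ≤ ⌈T⌉₊ := Nat.one_le_iff_ne_zero.mpr (by
    intro h
    have := Nat.ceil_pos.mpr hT0
    omega)
  have hNcast : (N:ℝ) = (⌈T⌉₊:ℝ) - 1 := by
    rw [hN']
    push_cast [hceil1]
    ring
  have hNup : (N:ℝ) < T := by
    rw [hNcast]
    have := Nat.ceil_lt_add_one (le_of_lt hT0)
    linarith
  have hNlow : T - 1 ≤ (N:ℝ) := by
    rw [hNcast]
    have := Nat.le_ceil T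
    linarith
  -- step 1 : measure bound
  have hNT : ∀ k : ℕ, 1 ≤ k → k ≤ N → (k:ℝ) < T := by
    intro k _ hk
    calc (k:ℝ) ≤ (N:ℝ) := Nat.cast_le.mpr hk
      _ < T := hNup
  have hmeas := G.walk_event_bound x P hP T N hNT
  have htoReal : (P {ω | ∀ n : ℕ, 0 < n → (n : ℝ) < T → ω n ≠ x}).toReal ≤ G.u x N x :=
    ENNReal.toReal_le_of_le_ofReal (G.u_nonneg x N x) hmeas
  -- parameters
  set n₁ : ℕ := ⌈M⌉₊ with hn₁'
  set b : ℕ := ⌈2*M⌉₊ with hb'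
  set k : ℕ := ⌊(lam-3)/3⌋₊ with hk'
  have hn₁ge : M ≤ (n₁:ℝ) := Nat.le_ceil M
  have hn₁le : (n₁:ℝ) ≤ 2*M := by
    have := Nat.ceil_lt_add_one (le_of_lt hM0)
    linarith
  have hn₁pos : 1 ≤ n₁ := Nat.one_le_iff_ne_zero.mpr (by
    intro h
    have := Nat.ceil_pos.mpr hM0
    omega)
  have hbge : 2*M ≤ (b:ℝ) := Nat.le_ceil _
  have hble : (b:ℝ) ≤ 3*M := by
    have := Nat.ceil_lt_add_one (show (0:ℝ) ≤ 2*M by linarith)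
    linarith
  have hkle : (k:ℝ) ≤ (lam-3)/3 := Nat.floor_le (by linarith)
  have hkge : (lam-6)/3 ≤ (k:ℝ) := by
    have := Nat.lt_floor_add_one ((lam-3)/3)
    linarith
  -- index inequality
  have hidx : n₁ + k*b ≤ N := by
    have hcast : ((n₁ + k*b : ℕ):ℝ) ≤ (N:ℝ) := by
      push_cast
      have h1 : (k:ℝ) * (b:ℝ) ≤ ((lam-3)/3) * (3*M) := by
        apply mul_le_mul hkle hble (by positivity) (by linarith)
      have h2 : ((lam-3)/3) * (3*M) = (lam - 3) * M := by ring
      have h3 : (n₁:ℝ) + (k:ℝ)*(b:ℝ) ≤ 2*M + (lam-3)*M := by linarith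
      have h4 : 2*M + (lam-3)*M = lam * M - M := by ring
      have h5 : lam * M - M ≤ T - 1 := by
        rw [hTM]; linarith
      linarith
    exact_mod_cast hcast
  -- chaining bound
  have hB : ∀ w, w ≠ x → G.u x b w ≤ 1/2 := by
    intro w hw
    have h1 := G.u_tail_le x b w hw
    have h2 : 2*M ≤ (b:ℝ)+1 := by linarith
    have h3 := G.u_nonneg x b w
    nlinarith
  have hchain := G.chain_iter x b (1/2) (by norm_num) hB k n₁ x hn₁pos
  have hmono : G.u x N x ≤ G.u x (n₁ + k*b) x := G.u_anti x (n₁ + k*b) N hidx x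
  -- kac bound
  have hkac := G.kac_bound x n₁
  have hdeg_u : G.deg x * G.u x n₁ x ≤ m / M := by
    rw [le_div_iff₀ hM0]
    nlinarith [hkac, mul_nonneg (mul_nonneg (le_of_lt hdx) (G.u_nonneg x n₁ x))
      (sub_nonneg.mpr hn₁ge)]
  -- put together
  have hfinal : G.deg x * r * G.u x N x ≤ (1/2:ℝ)^k := by
    have e1 : G.u x N x ≤ (1/2:ℝ)^k * G.u x n₁ x := le_trans hmono hchain
    have e2 : G.deg x * r * G.u x N x ≤ G.deg x * r * ((1/2:ℝ)^k * G.u x n₁ x) := by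
      apply mul_le_mul_of_nonneg_left e1
      positivity
    have e3 : G.deg x * r * ((1/2:ℝ)^k * G.u x n₁ x)
        = (1/2:ℝ)^k * (G.deg x * G.u x n₁ x) * r := by ring
    have e4 : (1/2:ℝ)^k * (G.deg x * G.u x n₁ x) * r ≤ (1/2:ℝ)^k * (m/M) * r := by
      apply mul_le_mul_of_nonneg_right _ (le_of_lt hr)
      apply mul_le_mul_of_nonneg_left hdeg_u
      positivity
    have e5 : (1/2:ℝ)^k * (m/M) * r = (1/2:ℝ)^k := by
      rw [hM']
      field_simp
    linarith
  -- exponential bound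
  have hexp : (1/2:ℝ)^k ≤ 4 * Real.exp (-(Real.log 2 / 3 * lam)) := by
    have hlog : 0 < Real.log 2 := Real.log_pos one_lt_two
    have hhalf : (1/2:ℝ)^k = Real.exp ((k:ℝ) * (-Real.log 2)) := by
      have h := Real.exp_nat_mul (-Real.log 2) k
      rw [Real.exp_neg, Real.exp_log (by norm_num : (0:ℝ) < 2)] at h
      rw [one_div, ← h]
    rw [hhalf]
    rw [show (4:ℝ) = Real.exp (Real.log 4) by rw [Real.exp_log]; norm_num]
    rw [← Real.exp_add]
    apply Real.exp_le_exp.mpr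
    have hlog4 : Real.log 4 = 2 * Real.log 2 := by
      rw [show (4:ℝ) = 2^2 by norm_num, Real.log_pow]
      push_cast; ring
    rw [hlog4]
    have hh := mul_le_mul_of_nonneg_right hkge (le_of_lt hlog)
    linarith [hh]
  calc G.deg x * r *
        (P {ω | ∀ n : ℕ, 0 < n → (n : ℝ) < T → ω n ≠ x}).toReal
      ≤ G.deg x * r * G.u x N x := by
        apply mul_le_mul_of_nonneg_left htoReal
        positivity
    _ ≤ (1/2:ℝ)^k := hfinal
    _ ≤ 4 * Real.exp (-(Real.log 2 / 3 * lam)) := hexp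
end

section
/- Let G be a finite connected unweighted graph (μ^G_{xy}=1 for every edge {x,y}∈E(G)) with at least two vertices. Then μ^G(B_G(x,r)) ≥ r for every x∈V(G) and every r∈[r₀(G),r(G)], where B_G(x,r) is the open ball of radius r in the resistance metric. Consequently, any collection (G_i)_{i∈I} of finite connected unweighted graphs for which there exists a finite constant c with m(G_i)≤c·r(G_i) for all i∈I satisfies UVD with v(r)=r. -/
open MeasureTheory Classical

/-- A collection of finite connected weighted graphs satisfies uniform volume growth with
volume doubling (UVD) with respect to a given non-decreasing doubling function `v`. -/
def UVDWith {I : Type} {V : I → Type} [∀ i, Fintype (V i)]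
    (G : ∀ i, FinWeightedGraph (V i)) (v : ℝ → ℝ) : Prop :=
  ∃ c1 c2 c3 : ℝ, 0 < c1 ∧ 0 < c2 ∧ 0 < c3 ∧
    (∀ r : ℝ, 0 ≤ r → 0 ≤ v r) ∧
    (∀ r s : ℝ, 0 ≤ r → r ≤ s → v r ≤ v s) ∧
    (∀ r : ℝ, 0 ≤ r → v (2 * r) ≤ c3 * v r) ∧
    (∀ (i : I) (x : V i) (r : ℝ), (G i).minRes ≤ r → r ≤ (G i).resDiam →
      c1 * v r ≤ (G i).vol ((G i).resBall x r)) ∧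
    (∀ i : I, (G i).mass ≤ c2 * v ((G i).resDiam))

/-- Uniform volume growth with volume doubling (UVD). -/
def UVD {I : Type} {V : I → Type} [∀ i, Fintype (V i)]
    (G : ∀ i, FinWeightedGraph (V i)) : Prop :=
  ∃ v : ℝ → ℝ, UVDWith G v


set_option linter.unusedSectionVars false
set_option linter.unusedVariables false

namespace FinWeightedGraph

variable {V : Type} [Fintype V] (G : FinWeightedGraph V)

/-- underlying simple graph -/
def toSimple : SimpleGraph V where
  Adj a b := 0 < G.w a b
  symm := by constructor; intro a b h; rw [G.symm b a]; exact h
  loopless := by constructor; intro a h; rw [G.loopless a] at h; exact lt_irrefl 0 h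

lemma toSimple_reachable (x y : V) : (G.toSimple).Reachable x y :=
  (SimpleGraph.reachable_iff_reflTransGen _ _).2 (G.connected x y)

lemma getVert_inj {SG : SimpleGraph V} {u v : V} (p : SG.Walk u v) (hp : p.IsPath) :
    ∀ i ≤ p.length, ∀ j ≤ p.length, p.getVert i = p.getVert j → i = j := by
  induction p with
  | nil => intro i hi j hj _; simp only [SimpleGraph.Walk.length_nil, Nat.le_zero] at hi hj; omega
  | @cons a b c h q ih =>
    rw [SimpleGraph.Walk.cons_isPath_iff] at hp
    intro i hi j hj hij
    match i, j with
    | 0, 0 => rfl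
    | 0, (j+1) =>
      exfalso
      apply hp.2
      rw [SimpleGraph.Walk.mem_support_iff_exists_getVert]
      refine ⟨j, ?_, ?_⟩
      · rw [← SimpleGraph.Walk.getVert_cons_succ q h, ← hij,
          SimpleGraph.Walk.getVert_zero]
      · simp only [SimpleGraph.Walk.length_cons] at hj; omega
    | (i+1), 0 =>
      exfalso
      apply hp.2
      rw [SimpleGraph.Walk.mem_support_iff_exists_getVert]
      refine ⟨i, ?_, ?_⟩
      · rw [← SimpleGraph.Walk.getVert_cons_succ q h, hij,
          SimpleGraph.Walk.getVert_zero]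
      · simp only [SimpleGraph.Walk.length_cons] at hi; omega
    | (i+1), (j+1) =>
      simp only [SimpleGraph.Walk.length_cons] at hi hj
      have := ih hp.1 i (by omega) j (by omega)
        (by rwa [SimpleGraph.Walk.getVert_cons_succ, SimpleGraph.Walk.getVert_cons_succ] at hij)
      omega

lemma dirichlet_ge (hw : ∀ x y : V, 0 < G.w x y → G.w x y = 1)
    {u v : V} (p : G.toSimple.Walk u v) (hp : p.IsPath) {i : ℕ} (hi : 1 ≤ i)
    (hil : i ≤ p.length) (f : V → ℝ) (hfu : f u = 0) (hfv : f (p.getVert i) = 1) :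
    (i : ℝ)⁻¹ ≤ G.dirichlet f := by
  set g : ℕ → ℝ := fun j => f (p.getVert j) with hg
  have hi0 : (0:ℝ) < (i : ℝ) := by exact_mod_cast hi
  have htel : ∑ j ∈ Finset.range i, (g (j + 1) - g j) = 1 := by
    rw [Finset.sum_range_sub g i]
    simp only [hg, SimpleGraph.Walk.getVert_zero, hfu, hfv, sub_zero]
  set S : ℝ := ∑ j ∈ Finset.range i, (g (j + 1) - g j) ^ 2 with hS
  have hcs : 1 ≤ (i : ℝ) * S := by
    have h := sq_sum_le_card_mul_sum_sq (s := Finset.range i) (f := fun j => g (j + 1) - g j)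
    rw [htel] at h
    simpa using h
  have hSinv : (i : ℝ)⁻¹ ≤ S := by
    rw [inv_eq_one_div, div_le_iff₀ hi0]
    linarith [hcs]
  refine le_trans hSinv ?_
  -- now show S ≤ dirichlet f
  set F : V × V → ℝ := fun q => G.w q.1 q.2 * (f q.1 - f q.2) ^ 2 with hF
  have hFnn : ∀ q : V × V, 0 ≤ F q := fun q => mul_nonneg (G.nonneg _ _) (sq_nonneg _)
  have hT : G.dirichlet f = (1/2) * ∑ q ∈ Finset.univ ×ˢ Finset.univ, F q := by
    rw [dirichlet, Finset.sum_product]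
  set s₁ : Finset (V × V) := (Finset.range i).image (fun j => (p.getVert j, p.getVert (j+1))) with hs₁
  set s₂ : Finset (V × V) := (Finset.range i).image (fun j => (p.getVert (j+1), p.getVert j)) with hs₂
  have hinj := getVert_inj p hp
  have hwone : ∀ j < i, G.w (p.getVert j) (p.getVert (j+1)) = 1 := by
    intro j hj
    exact hw _ _ (p.adj_getVert_succ (lt_of_lt_of_le hj hil))
  have hinj1 : Set.InjOn (fun j => (p.getVert j, p.getVert (j+1))) (Finset.range i) := by
    intro a ha b hb hab
    simp only [Finset.coe_range, Set.mem_Iio] at ha hb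
    exact hinj a (le_trans (le_of_lt ha) hil) b (le_trans (le_of_lt hb) hil)
      (congrArg Prod.fst hab)
  have hinj2 : Set.InjOn (fun j => (p.getVert (j+1), p.getVert j)) (Finset.range i) := by
    intro a ha b hb hab
    simp only [Finset.coe_range, Set.mem_Iio] at ha hb
    exact hinj a (le_trans (le_of_lt ha) hil) b (le_trans (le_of_lt hb) hil)
      (congrArg Prod.snd hab)
  have hdisj : Disjoint s₁ s₂ := by
    rw [Finset.disjoint_left]
    rintro ⟨a1, a2⟩ h1 h2
    simp only [hs₁, hs₂, Finset.mem_image, Finset.mem_range, Prod.mk.injEq] at h1 h2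
    obtain ⟨a, ha, haa1, haa2⟩ := h1
    obtain ⟨b, hb, hbb1, hbb2⟩ := h2
    have e1 : a = b + 1 := hinj a (le_trans (le_of_lt ha) hil) (b+1) (le_trans hb hil)
      (haa1.trans hbb1.symm)
    have e2 : a + 1 = b := hinj (a+1) (le_trans ha hil) b (le_trans (le_of_lt hb) hil)
      (haa2.trans hbb2.symm)
    omega
  have hsum1 : ∑ q ∈ s₁, F q = S := by
    rw [hs₁, Finset.sum_image hinj1]
    apply Finset.sum_congr rfl
    intro j hj
    rw [Finset.mem_range] at hj
    simp only [hF, hwone j hj, one_mul, hg]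
    rw [← neg_sub, neg_sq]
  have hsum2 : ∑ q ∈ s₂, F q = S := by
    rw [hs₂, Finset.sum_image hinj2]
    apply Finset.sum_congr rfl
    intro j hj
    rw [Finset.mem_range] at hj
    simp only [hF, G.symm (p.getVert (j+1)) (p.getVert j), hwone j hj, one_mul, hg]
  have hle : ∑ q ∈ s₁ ∪ s₂, F q ≤ ∑ q ∈ Finset.univ ×ˢ Finset.univ, F q := by
    apply Finset.sum_le_sum_of_subset_of_nonneg
    · intro q _; simp
    · intro q _ _; exact hFnn q
  rw [Finset.sum_union hdisj, hsum1, hsum2] at hle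
  rw [hT]
  linarith

lemma res_getVert_le (hw : ∀ x y : V, 0 < G.w x y → G.w x y = 1)
    {u v : V} (p : G.toSimple.Walk u v) (hp : p.IsPath) {i : ℕ} (hil : i ≤ p.length) :
    G.res u (p.getVert i) ≤ (i : ℝ) := by
  by_cases h : u = p.getVert i
  · rw [res, if_pos h]; exact_mod_cast Nat.zero_le i
  · have hi : 1 ≤ i := by
      rcases Nat.eq_zero_or_pos i with h0 | h1
      · exact absurd (by rw [h0, SimpleGraph.Walk.getVert_zero]) h
      · exact h1
    have hi0 : (0:ℝ) < (i : ℝ)⁻¹ := by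
      apply inv_pos.2; exact_mod_cast hi
    rw [res, if_neg h]
    set Sset := {e : ℝ | ∃ f : V → ℝ, f u = 0 ∧ f (p.getVert i) = 1 ∧ G.dirichlet f = e}
    have hne : Sset.Nonempty := by
      refine ⟨G.dirichlet (fun z => if z = p.getVert i then 1 else 0),
        fun z => if z = p.getVert i then 1 else 0, ?_, ?_, rfl⟩
      · simp only []; rw [if_neg h]
      · simp
    have hlb : (i : ℝ)⁻¹ ≤ sInf Sset := by
      apply le_csInf hne
      rintro e ⟨f, hf0, hf1, rfl⟩
      exact G.dirichlet_ge hw p hp hi hil f hf0 hf1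
    calc (sInf Sset)⁻¹ ≤ ((i : ℝ)⁻¹)⁻¹ := by
          apply inv_anti₀ hi0 hlb
      _ = (i : ℝ) := inv_inv _

lemma res_le_card [Nonempty V] (hw : ∀ x y : V, 0 < G.w x y → G.w x y = 1) (x y : V) :
    G.res x y ≤ (Fintype.card V : ℝ) - 1 := by
  have hcard : 1 ≤ Fintype.card V := Fintype.card_pos
  by_cases h : x = y
  · rw [res, if_pos h]
    have : (1:ℝ) ≤ (Fintype.card V : ℝ) := by exact_mod_cast hcard
    linarith
  · obtain ⟨q⟩ := G.toSimple_reachable x y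
    set p := q.bypass with hpdef
    have hp : p.IsPath := q.bypass_isPath
    have hlen : p.length < Fintype.card V := hp.length_lt
    have := G.res_getVert_le hw p hp (le_refl p.length)
    rw [SimpleGraph.Walk.getVert_length] at this
    refine le_trans this ?_
    have : (p.length : ℝ) ≤ (Fintype.card V : ℝ) - 1 := by
      have : p.length + 1 ≤ Fintype.card V := hlen
      have := (Nat.cast_le (α := ℝ)).2 this
      push_cast at this
      linarith
    exact this

lemma resDiam_nonneg [Nonempty V] : 0 ≤ G.resDiam := by
  obtain ⟨x0⟩ := ‹Nonempty V›
  have h0 : G.res x0 x0 = 0 := by rw [res, if_pos rfl]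
  calc (0:ℝ) = G.res x0 x0 := h0.symm
    _ ≤ ⨆ y, G.res x0 y := le_ciSup (Set.Finite.bddAbove (Set.finite_range _)) x0
    _ ≤ ⨆ x, ⨆ y, G.res x y := le_ciSup (f := fun x => ⨆ y, G.res x y) (Set.Finite.bddAbove (Set.finite_range _)) x0

lemma resDiam_le_card [Nonempty V] (hw : ∀ x y : V, 0 < G.w x y → G.w x y = 1) :
    G.resDiam ≤ (Fintype.card V : ℝ) - 1 := by
  apply ciSup_le
  intro x
  apply ciSup_le
  intro y
  exact G.res_le_card hw x y

lemma one_le_deg [Nontrivial V] (hw : ∀ x y : V, 0 < G.w x y → G.w x y = 1) (x : V) :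
    1 ≤ G.deg x := by
  obtain ⟨y, hy⟩ := exists_ne x
  rcases (G.connected x y).cases_head with h | ⟨z, hz, _⟩
  · exact absurd h.symm hy
  · calc (1:ℝ) = G.w x z := (hw x z hz).symm
      _ ≤ ∑ t, G.w x t := Finset.single_le_sum (fun t _ => G.nonneg x t) (Finset.mem_univ z)

lemma card_le_mass [Nontrivial V] (hw : ∀ x y : V, 0 < G.w x y → G.w x y = 1) :
    (Fintype.card V : ℝ) ≤ G.mass := by
  rw [mass]
  calc (Fintype.card V : ℝ) = ∑ _x : V, (1:ℝ) := by simp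
    _ ≤ ∑ x, G.deg x := Finset.sum_le_sum (fun x _ => G.one_le_deg hw x)

lemma vol_nonneg (A : Set V) : 0 ≤ G.vol A := by
  apply Finset.sum_nonneg
  intro x _
  exact Set.indicator_nonneg (fun y _ => Finset.sum_nonneg fun t _ => G.nonneg y t) x

lemma ball_volume [Nontrivial V] (hw : ∀ x y : V, 0 < G.w x y → G.w x y = 1)
    (x : V) (r : ℝ) (h0 : G.minRes ≤ r) (h1 : r ≤ G.resDiam) :
    r ≤ G.vol (G.resBall x r) := by
  rcases le_or_gt r 0 with hr | hr
  · exact le_trans hr (G.vol_nonneg _)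
  by_cases hball : ∀ y, G.res x y < r
  · have hvol : G.vol (G.resBall x r) = G.mass := by
      rw [vol, mass]
      apply Finset.sum_congr rfl
      intro y _
      exact Set.indicator_of_mem (show y ∈ G.resBall x r from hball y) G.deg
    rw [hvol]
    have h2 := G.resDiam_le_card hw
    have h3 := G.card_le_mass hw
    linarith
  · push_neg at hball
    obtain ⟨y, hy⟩ := hball
    have hxy : x ≠ y := by
      intro h
      rw [← h, res, if_pos rfl] at hy
      linarith
    obtain ⟨q⟩ := G.toSimple_reachable x y
    set p := q.bypass with hpdef
    have hp : p.IsPath := q.bypass_isPath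
    have hres : G.res x y ≤ (p.length : ℝ) := by
      have := G.res_getVert_le hw p hp (le_refl p.length)
      rwa [SimpleGraph.Walk.getVert_length] at this
    have hrl : r ≤ (p.length : ℝ) := le_trans hy hres
    set k := ⌈r⌉₊ with hk
    have hkl : k ≤ p.length := Nat.ceil_le.2 hrl
    have hmem : ∀ j < k, p.getVert j ∈ G.resBall x r := by
      intro j hj
      have hjr : (j : ℝ) < r := Nat.lt_ceil.1 hj
      have : G.res x (p.getVert j) ≤ (j : ℝ) :=
        G.res_getVert_le hw p hp (le_trans (le_of_lt hj) hkl)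
      exact lt_of_le_of_lt this hjr
    have hinj : Set.InjOn p.getVert (Finset.range k) := by
      intro a ha b hb hab
      simp only [Finset.coe_range, Set.mem_Iio] at ha hb
      exact getVert_inj p hp a (le_trans (le_of_lt ha) hkl) b (le_trans (le_of_lt hb) hkl) hab
    have hsub : (Finset.range k).image p.getVert ⊆ Finset.univ := Finset.subset_univ _
    have step1 : ∑ v ∈ (Finset.range k).image p.getVert, (G.resBall x r).indicator G.deg v
        ≤ G.vol (G.resBall x r) := by
      rw [vol]
      apply Finset.sum_le_sum_of_subset_of_nonneg hsub
      intro v _ _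
      exact Set.indicator_nonneg (fun z _ => Finset.sum_nonneg fun t _ => G.nonneg z t) v
    have step2 : ∑ v ∈ (Finset.range k).image p.getVert, (G.resBall x r).indicator G.deg v
        = ∑ j ∈ Finset.range k, (G.resBall x r).indicator G.deg (p.getVert j) :=
      Finset.sum_image (fun a ha b hb hab => hinj (by simpa using ha) (by simpa using hb) hab)
    have step3 : (k : ℝ) ≤ ∑ j ∈ Finset.range k, (G.resBall x r).indicator G.deg (p.getVert j) := by
      calc (k : ℝ) = ∑ _j ∈ Finset.range k, (1:ℝ) := by simp
        _ ≤ _ := by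
            apply Finset.sum_le_sum
            intro j hj
            rw [Finset.mem_range] at hj
            rw [Set.indicator_of_mem (hmem j hj)]
            exact G.one_le_deg hw _
    have hrk : r ≤ (k : ℝ) := Nat.le_ceil r
    linarith [step1, step2 ▸ step3]

end FinWeightedGraph

/-- Section 5.1: for unweighted graphs, resistance balls of radius `r ∈ [r₀(G), r(G)]` have
measure at least `r`; consequently, any collection of unweighted graphs with
`m(G_i) ≤ c·r(G_i)` satisfies UVD with `v(r) = r`. -/
theorem one_dimensional_graphs_UVD :
    (∀ (V : Type) [Fintype V] [Nontrivial V] (G : FinWeightedGraph V),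
      (∀ x y : V, 0 < G.w x y → G.w x y = 1) →
      ∀ (x : V) (r : ℝ), G.minRes ≤ r → r ≤ G.resDiam →
        r ≤ G.vol (G.resBall x r)) ∧
    (∀ (I : Type) (V : I → Type) [∀ i, Fintype (V i)] [∀ i, Nontrivial (V i)]
      (G : ∀ i, FinWeightedGraph (V i)),
      (∀ (i : I) (x y : V i), 0 < (G i).w x y → (G i).w x y = 1) →
      (∃ c : ℝ, ∀ i : I, (G i).mass ≤ c * (G i).resDiam) →
      UVDWith G (fun r => r)) := by
  constructor
  · intro V _ _ G hw x r h0 h1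
    exact G.ball_volume hw x r h0 h1
  · rintro I V _ _ G hw ⟨c, hc⟩
    refine ⟨1, max c 1, 2, one_pos,
      lt_of_lt_of_le one_pos (le_max_right c 1), two_pos,
      fun r hr => hr, fun r s _ hrs => hrs,
      fun r hr => le_of_eq rfl, ?_, ?_⟩
    · intro i x r h0 h1
      rw [one_mul]
      exact (G i).ball_volume (hw i) x r h0 h1
    · intro i
      exact le_trans (hc i)
        (mul_le_mul_of_nonneg_right (le_max_left c 1) ((G i).resDiam_nonneg))
end
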